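/- Let E be a finite directed graph. Then the relation ≥ on cycles of E (c ≥ c' iff there is a path from a vertex of c to a vertex of c') is antisymmetric if and only if distinct cycles in E have no common vertex. -/

import Mathlib

/-- A directed graph: vertices, edges, source and target (range) maps. -/
structure DGraph where
  V : Type
  E : Type
  src : E → V
  tgt : E → V

namespace DGraph

/-- There is a (possibly empty) directed path from `u` to `w`. -/
def Reaches (G : DGraph) (u w : G.V) : Prop :=
  Relation.ReflTransGen (fun a b => ∃ e : G.E, G.src e = a ∧ G.tgt e = b) u w

/-- A nonempty list of composable edges, closed, not passing through any vertex twice. -/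
def IsCycle (G : DGraph) (p : List G.E) : Prop :=
  p ≠ [] ∧ List.Chain' (fun e f => G.tgt e = G.src f) p ∧
    p.getLast?.map G.tgt = p.head?.map G.src ∧ (p.map G.src).Nodup

/-- The preorder on cycles: `c ≥ c'` iff some vertex of `c` reaches some vertex of `c'`. -/
def CycleGe (G : DGraph) (c c' : List G.E) : Prop :=
  ∃ u w : G.V, u ∈ c.map G.src ∧ w ∈ c'.map G.src ∧ G.Reaches u w

/-- Two cycles are the same cycle iff one is a rotation of the other. -/
def IsRotation (G : DGraph) (c c' : List G.E) : Prop :=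
  ∃ n : ℕ, c' = c.rotate n

/-- An infinite path, as a coherent sequence of edges. -/
def IsInfPath (G : DGraph) (p : ℕ → G.E) : Prop :=
  ∀ n : ℕ, G.tgt (p n) = G.src (p (n + 1))

/-- A rational infinite path: `g g g ⋯` for a (finite, nonempty, closed) path `g`. -/
def IsRational (G : DGraph) (q : ℕ → G.E) : Prop :=
  ∃ (g : List G.E) (hg : g ≠ []),
    List.Chain' (fun e f => G.tgt e = G.src f) g ∧
    g.getLast?.map G.tgt = g.head?.map G.src ∧
    ∀ k : ℕ, q k = g.get ⟨k % g.length, Nat.mod_lt _ (List.length_pos_iff.mpr hg)⟩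

/-- Tail equivalence of infinite paths. -/
def TailEquiv (G : DGraph) (p q : ℕ → G.E) : Prop :=
  ∃ m n : ℕ, ∀ k : ℕ, p (m + k) = q (n + k)

end DGraph

namespace DGraph

variable {G : DGraph}

/-- A nonempty walk from `u` to `w`, as a list of edges. -/
def HWalk (G : DGraph) (p : List G.E) (u w : G.V) : Prop :=
  List.Chain' (fun e f => G.tgt e = G.src f) p ∧
    p.head?.map G.src = some u ∧ p.getLast?.map G.tgt = some w

lemma HWalk.ne_nil {p : List G.E} {u w : G.V} (h : G.HWalk p u w) : p ≠ [] := by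
  rintro rfl; simpa using h.2.1

lemma head_mem_map {p : List G.E} {u w : G.V} (h : G.HWalk p u w) : u ∈ p.map G.src := by
  obtain ⟨_, hh, _⟩ := h
  cases p with
  | nil => simp at hh
  | cons e t =>
    simp only [List.head?_cons, Option.map_some, Option.some.injEq] at hh
    simp [← hh]

lemma hwalk_single (e : G.E) : G.HWalk [e] (G.src e) (G.tgt e) :=
  ⟨List.isChain_singleton _, by simp, by simp⟩

lemma getLast?_append_ne {α : Type*} {l l' : List α} (h : l' ≠ []) :
    (l ++ l').getLast? = l'.getLast? := by
  rw [List.getLast?_append, List.getLast?_eq_getLast (l := l') h]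
  rfl

lemma head?_append_ne {α : Type*} {l l' : List α} (h : l ≠ []) :
    (l ++ l').head? = l.head? := by
  rw [List.head?_append]
  cases l with
  | nil => exact absurd rfl h
  | cons a t => rfl

lemma HWalk.append {p q : List G.E} {u v w : G.V}
    (hp : G.HWalk p u v) (hq : G.HWalk q v w) : G.HWalk (p ++ q) u w := by
  obtain ⟨hc1, hh1, hl1⟩ := hp
  obtain ⟨hc2, hh2, hl2⟩ := hq
  refine ⟨List.isChain_append.mpr ⟨hc1, hc2, ?_⟩, ?_, ?_⟩
  · intro x hx y hy
    have hx' : G.tgt x = v := by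
      rw [hx] at hl1; simpa using hl1
    have hy' : G.src y = v := by
      rw [hy] at hh2; simpa using hh2
    rw [hx', hy']
  · rw [head?_append_ne (by rintro rfl; simp at hh1)]; exact hh1
  · rw [getLast?_append_ne (by rintro rfl; simp at hh2)]; exact hl2

lemma HWalk.reaches {p : List G.E} {u w : G.V} (h : G.HWalk p u w) : G.Reaches u w := by
  induction p generalizing u with
  | nil => exact absurd rfl h.ne_nil
  | cons e t ih =>
    obtain ⟨hc, hh, hl⟩ := h
    simp only [List.head?_cons, Option.map_some, Option.some.injEq] at hh
    cases t with
    | nil =>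
      simp only [List.getLast?_singleton, Option.map_some, Option.some.injEq] at hl
      exact Relation.ReflTransGen.single ⟨e, hh, hl⟩
    | cons f t' =>
      have hef : G.tgt e = G.src f := (List.isChain_cons_cons.mp hc).1
      have step : G.Reaches u (G.src f) :=
        Relation.ReflTransGen.single ⟨e, hh, hef⟩
      refine step.trans (ih ⟨(List.isChain_cons_cons.mp hc).2, by simp, ?_⟩)
      rw [← hl, List.getLast?_cons_cons]

lemma reaches_to_walk {u w : G.V} (h : G.Reaches u w) :
    u = w ∨ ∃ p, G.HWalk p u w := by
  induction h with
  | refl => exact Or.inl rfl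
  | tail _ hbc ih =>
    obtain ⟨e, he1, he2⟩ := hbc
    rcases ih with rfl | ⟨p, hp⟩
    · right; exact ⟨[e], he1 ▸ he2 ▸ hwalk_single e⟩
    · right; exact ⟨p ++ [e], hp.append (he1 ▸ he2 ▸ hwalk_single e)⟩

/-- In a closed chain, every `src`-vertex reaches every other. -/
lemma cycle_reaches {p : List G.E} (hne : p ≠ [])
    (hc : List.Chain' (fun e f => G.tgt e = G.src f) p)
    (hcl : p.getLast?.map G.tgt = p.head?.map G.src)
    {u v : G.V} (hu : u ∈ p.map G.src) (hv : v ∈ p.map G.src) :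
    G.Reaches u v := by
  obtain ⟨e₀, t, rfl⟩ := List.exists_cons_of_ne_nil hne
  set α := G.src e₀ with hα
  have key : ∀ x : G.V, x ∈ (e₀ :: t).map G.src →
      G.Reaches x α ∧ G.Reaches α x := by
    intro x hx
    obtain ⟨e, he, rfl⟩ := List.mem_map.mp hx
    obtain ⟨a, b, hab⟩ := List.append_of_mem he
    obtain ⟨hca, hcb, hj⟩ := List.isChain_append.mp (hab ▸ hc)
    constructor
    · have hw : G.HWalk (e :: b) (G.src e) α := by
        refine ⟨hcb, by simp, ?_⟩
        have : ((e₀ :: t).getLast?).map G.tgt = some α := by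
          rw [hcl]; simp [hα]
        rw [hab] at this
        rwa [getLast?_append_ne (by simp)] at this
      exact hw.reaches
    · cases a with
      | nil =>
        have : e₀ = e := by simpa using congrArg List.head? hab
        rw [hα, this]
        exact Relation.ReflTransGen.refl
      | cons a₀ a' =>
        have hw : G.HWalk (a₀ :: a') α (G.src e) := by
          refine ⟨hca, ?_, ?_⟩
          · have : a₀ = e₀ := by simpa using (congrArg List.head? hab).symm
            simp [this, hα]
          · have hgl := List.getLast?_eq_getLast (l := a₀ :: a') (by simp)
            have hmem : (a₀ :: a').getLast (by simp) ∈ (a₀ :: a').getLast? := by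
              rw [hgl]; rfl
            have hj' := hj _ hmem e (by simp)
            rw [hgl]
            simp [hj']
        exact hw.reaches
  exact ((key u hu).1).trans ((key v hv).2)

lemma exists_dup_split {α β : Type*} (g : α → β) :
    ∀ l : List α, ¬ (l.map g).Nodup →
      ∃ a e b f c, l = a ++ e :: b ++ f :: c ∧ g e = g f := by
  intro l
  induction l with
  | nil => simp
  | cons x t ih =>
    intro h
    by_cases hx : g x ∈ t.map g
    · obtain ⟨f, hf, hgf⟩ := List.mem_map.mp hx
      obtain ⟨b, c, rfl⟩ := List.append_of_mem hf
      exact ⟨[], x, b, f, c, by simp, hgf.symm⟩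
    · have ht : ¬ (t.map g).Nodup := by
        intro hn
        exact h (by rw [List.map_cons, List.nodup_cons]; exact ⟨hx, hn⟩)
      obtain ⟨a, e, b, f, c, rfl, hef⟩ := ih ht
      exact ⟨x :: a, e, b, f, c, by simp, hef⟩

lemma isRotation_iff {c c' : List G.E} : G.IsRotation c c' ↔ c ~r c' :=
  exists_congr fun _ => eq_comm

lemma mem_of_rotation {c c' : List G.E} (h : G.IsRotation c c') {v : G.V}
    (hv : v ∈ c.map G.src) : v ∈ c'.map G.src := by
  obtain ⟨n, rfl⟩ := h
  rw [List.map_rotate]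
  exact List.mem_rotate.mpr hv

/-- Under the disjointness hypothesis, any closed walk stays on a single cycle. -/
lemma closed_walk_cycle
    (hshare : ∀ c c' : List G.E, G.IsCycle c → G.IsCycle c' →
      ∀ v : G.V, v ∈ c.map G.src → v ∈ c'.map G.src → G.IsRotation c c') :
    ∀ n (p : List G.E) (u : G.V), p.length ≤ n → G.HWalk p u u →
      ∃ γ, G.IsCycle γ ∧ ∀ v ∈ p.map G.src, v ∈ γ.map G.src := by
  intro n
  induction n with
  | zero =>
    intro p u hlen hw
    exact absurd (List.length_eq_zero_iff.mp (Nat.le_zero.mp hlen)) hw.ne_nil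
  | succ n ih =>
    intro p u hlen hw
    obtain ⟨hc, hh, hl⟩ := hw
    by_cases hnd : (p.map G.src).Nodup
    · exact ⟨p, ⟨by rintro rfl; simp at hh, hc, hl.trans hh.symm, hnd⟩,
        fun v hv => hv⟩
    · obtain ⟨a, e, b, f, c, rfl, hef⟩ := exists_dup_split G.src p hnd
      -- note: a ++ e :: b ++ f :: c parses as (a ++ e :: b) ++ (f :: c)
      obtain ⟨hcl1, hcfc, hJ1⟩ := List.isChain_append.mp hc
      obtain ⟨hca, hceb, hJ0⟩ := List.isChain_append.mp hcl1
      have hgl : (e :: b).getLast? = some ((e :: b).getLast (by simp)) :=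
        List.getLast?_eq_getLast (l := e :: b) (by simp)
      -- W1 : closed walk e :: b at src e
      have hW1 : G.HWalk (e :: b) (G.src e) (G.src e) := by
        refine ⟨hceb, by simp, ?_⟩
        have hmem : (e :: b).getLast (by simp) ∈ (a ++ e :: b).getLast? := by
          rw [getLast?_append_ne (by simp), hgl]; rfl
        have hlast1 := hJ1 _ hmem f (by simp)
        rw [hgl]
        simp [hlast1, hef]
      -- W2 : closed walk a ++ f :: c at u
      have hW2 : G.HWalk (a ++ f :: c) u u := by
        refine ⟨List.isChain_append.mpr ⟨hca, hcfc, ?_⟩, ?_, ?_⟩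
        · intro x hx y hy
          simp only [List.head?_cons, Option.mem_def, Option.some.injEq] at hy
          have h0 := hJ0 x hx e (by simp)
          rw [← hy, h0, hef]
        · cases a with
          | nil =>
            simp only [List.nil_append] at hh ⊢
            rw [head?_append_ne (l := e :: b) (by simp)] at hh
            simp only [List.head?_cons, Option.map_some, Option.some.injEq] at hh ⊢
            rw [← hef]; exact hh
          | cons a₀ a' =>
            rw [head?_append_ne (by simp)]
            rw [head?_append_ne (by simp), head?_append_ne (by simp)] at hh
            exact hh
        · rw [getLast?_append_ne (by simp)]
          rwa [getLast?_append_ne (by simp)] at hl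
      have hlen1 : (e :: b).length ≤ n := by
        simp only [List.length_append, List.length_cons] at hlen ⊢
        omega
      have hlen2 : (a ++ f :: c).length ≤ n := by
        simp only [List.length_append, List.length_cons] at hlen ⊢
        omega
      obtain ⟨γ₁, hγ₁, hm₁⟩ := ih (e :: b) (G.src e) hlen1 hW1
      obtain ⟨γ₂, hγ₂, hm₂⟩ := ih (a ++ f :: c) u hlen2 hW2
      have hrot : G.IsRotation γ₁ γ₂ := by
        refine hshare γ₁ γ₂ hγ₁ hγ₂ (G.src e) (hm₁ _ (by simp)) (hm₂ _ ?_)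
        rw [hef]; simp
      refine ⟨γ₂, hγ₂, ?_⟩
      intro v hv
      simp only [List.map_append, List.map_cons, List.mem_append, List.mem_cons] at hv
      rcases hv with (h1 | h2 | h3) | h4 | h5
      · exact hm₂ v (by simp [h1])
      · exact mem_of_rotation hrot (hm₁ v (by simp [h2]))
      · exact mem_of_rotation hrot (hm₁ v (by simp [h3]))
      · exact hm₂ v (by simp [h4])
      · exact hm₂ v (by simp [h5])

end DGraph

/-- For a finite graph, the relation `≥` on cycles is antisymmetric (up to
rotation) if and only if distinct cycles have no common vertex. -/
theorem stmt11 (G : DGraph) [Fintype G.V] [Fintype G.E] :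
    (∀ c c' : List G.E, G.IsCycle c → G.IsCycle c' →
        G.CycleGe c c' → G.CycleGe c' c → G.IsRotation c c') ↔
    (∀ c c' : List G.E, G.IsCycle c → G.IsCycle c' → ¬ G.IsRotation c c' →
        ∀ v : G.V, v ∈ c.map G.src → v ∉ c'.map G.src) := by
  constructor
  · intro hanti c c' hc hc' hrot v hvc hvc'
    exact hrot (hanti c c' hc hc'
      ⟨v, v, hvc, hvc', Relation.ReflTransGen.refl⟩
      ⟨v, v, hvc', hvc, Relation.ReflTransGen.refl⟩)
  · intro hdisj c c' hc hc' hge hge'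
    have hshare : ∀ d d' : List G.E, G.IsCycle d → G.IsCycle d' →
        ∀ v : G.V, v ∈ d.map G.src → v ∈ d'.map G.src → G.IsRotation d d' := by
      intro d d' hd hd' v h1 h2
      by_contra hn
      exact hdisj d d' hd hd' hn v h1 h2
    obtain ⟨u, w, hu, hw, huw⟩ := hge
    obtain ⟨w', u', hw', hu', hwu⟩ := hge'
    have hwu2 : G.Reaches w u :=
      ((G.cycle_reaches hc'.1 hc'.2.1 hc'.2.2.1 hw hw').trans hwu).trans
        (G.cycle_reaches hc.1 hc.2.1 hc.2.2.1 hu' hu)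
    by_cases heq : u = w
    · exact hshare c c' hc hc' u hu (heq ▸ hw)
    · rcases DGraph.reaches_to_walk huw with rfl | ⟨p₁, hp₁⟩
      · exact absurd rfl heq
      rcases DGraph.reaches_to_walk hwu2 with h | ⟨p₂, hp₂⟩
      · exact absurd h.symm heq
      have hq : G.HWalk (p₁ ++ p₂) u u := hp₁.append hp₂
      obtain ⟨γ, hγ, hmem⟩ := G.closed_walk_cycle hshare (p₁ ++ p₂).length _ _ le_rfl hq
      have huγ : u ∈ γ.map G.src := by
        refine hmem u ?_
        rw [List.map_append]
        exact List.mem_append.mpr (Or.inl (DGraph.head_mem_map hp₁))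
      have hwγ : w ∈ γ.map G.src := by
        refine hmem w ?_
        rw [List.map_append]
        exact List.mem_append.mpr (Or.inr (DGraph.head_mem_map hp₂))
      have r1 : G.IsRotation c γ := hshare c γ hc hγ u hu huγ
      have r2 : G.IsRotation γ c' := hshare γ c' hγ hc' w hwγ hw
      exact DGraph.isRotation_iff.mpr
        ((DGraph.isRotation_iff.mp r1).trans (DGraph.isRotation_iff.mp r2))
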